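/- Let p be an odd prime, e ≥ 1, a ∈ (Z/p^e Z)^×, b ∈ p·Z/p^e Z, and suppose t² - b t - a = (t - α)(t - β) with α, β ∈ (Z/p^e Z)^×. Then α - β is a unit in Z/p^e Z, and for any unit x₀ with x₀ ∉ {α, β} the orbit of x₀ under φ is purely periodic with least period ord(αβ⁻¹) computed modulo p^{e-k'}, where k' = max(v_p(x₀ - α), v_p(x₀ - β)). -/

import Mathlib

open scoped Classical
open Polynomial

/-- Truncated p-adic valuation on `Z/p^e Z`. -/
def vp (p e : ℕ) (y : ZMod (p ^ e)) : ℕ :=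
  if y = 0 then e else min (padicValNat p y.val) e

namespace Stmt15Aux
variable {p e : ℕ}

lemma ppow0 (he : 1 ≤ e) : ((p : ZMod (p^e)))^e = 0 := by
  rw [← Nat.cast_pow, ZMod.natCast_self]

lemma nilp (he : 1 ≤ e) {y : ZMod (p^e)} (h : (p:ZMod (p^e)) ∣ y) :
    IsNilpotent y := by
  obtain ⟨c, rfl⟩ := h
  exact ⟨e, by rw [mul_pow, ppow0 he, zero_mul]⟩

lemma nontriv (hp : p.Prime) (he : 1 ≤ e) : (1:ZMod (p^e)) ≠ 0 := by
  haveI : Fact (1 < p^e) := ⟨Nat.one_lt_pow (by omega) hp.one_lt⟩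
  exact one_ne_zero

lemma isUnit_iff_not_dvd (hp : p.Prime) (he : 1 ≤ e) (y : ZMod (p^e)) :
    IsUnit y ↔ ¬ (p : ZMod (p^e)) ∣ y := by
  haveI : NeZero (p^e) := ⟨(pow_pos hp.pos e).ne'⟩
  constructor
  · intro hu hd
    have hup : IsUnit ((p : ZMod (p^e))) := isUnit_of_dvd_unit hd hu
    have := hup.pow e
    rw [ppow0 he] at this
    exact nontriv hp he (isUnit_zero_iff.mp this).symm
  · intro hnd
    have hv : ¬ p ∣ y.val := by
      intro h
      obtain ⟨c, hc⟩ := h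
      exact hnd ⟨(c : ZMod (p^e)), by
        rw [← Nat.cast_mul, ← hc, ZMod.natCast_val, ZMod.cast_id]⟩
    have hcop : Nat.Coprime y.val (p^e) :=
      (((Nat.Prime.coprime_iff_not_dvd hp).mpr hv).symm).pow_right e
    have := (ZMod.isUnit_iff_coprime y.val (p^e)).mpr hcop
    rwa [ZMod.natCast_val, ZMod.cast_id] at this

lemma unit_add_p_mul (hp : p.Prime) (he : 1 ≤ e) {x y : ZMod (p^e)}
    (hx : IsUnit x) (hy : (p:ZMod (p^e)) ∣ y) : IsUnit (x + y) := by
  exact (nilp he hy).isUnit_add_left_of_commute hx (Commute.all _ _)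

lemma pow_dvd_iff (hp : p.Prime) (he : 1 ≤ e) {k : ℕ} (hk : k ≤ e) (y : ZMod (p^e)) :
    (p : ZMod (p^e))^k ∣ y ↔ p^k ∣ y.val := by
  haveI : NeZero (p^e) := ⟨(pow_pos hp.pos e).ne'⟩
  constructor
  · rintro ⟨d, rfl⟩
    have h0 : (((( p:ZMod (p^e))^k * d).val : ℕ) : ZMod (p^k)) = 0 := by
      have h1 : (ZMod.castHom (pow_dvd_pow p hk) (ZMod (p^k))) ((p:ZMod (p^e))^k * d) = 0 := by
        rw [map_mul, map_pow, map_natCast, ← Nat.cast_pow, ZMod.natCast_self, zero_mul]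
      rw [ZMod.natCast_val, ← ZMod.castHom_apply (h := pow_dvd_pow p hk), h1]
    exact (ZMod.natCast_eq_zero_iff _ _).mp h0
  · rintro ⟨c, hc⟩
    refine ⟨(c : ZMod (p^e)), ?_⟩
    rw [← Nat.cast_pow, ← Nat.cast_mul, ← hc, ZMod.natCast_val, ZMod.cast_id]

lemma pmul_eq_zero_iff (hp : p.Prime) (he : 1 ≤ e) {k : ℕ} (hk : k ≤ e) (c : ZMod (p^e)) :
    (p : ZMod (p^e))^k * c = 0 ↔ (p : ZMod (p^e))^(e-k) ∣ c := by
  haveI : NeZero (p^e) := ⟨(pow_pos hp.pos e).ne'⟩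
  have hc : ((c.val : ℕ) : ZMod (p^e)) = c := by rw [ZMod.natCast_val, ZMod.cast_id]
  rw [pow_dvd_iff hp he (Nat.sub_le e k)]
  constructor
  · intro h
    have h2 : ((p^k * c.val : ℕ) : ZMod (p^e)) = 0 := by
      push_cast
      rw [hc]; exact h
    have h3 : p^e ∣ p^k * c.val := (ZMod.natCast_eq_zero_iff _ _).mp h2
    have h4 : p^k * p^(e-k) ∣ p^k * c.val := by
      rwa [← pow_add, Nat.add_sub_cancel' hk]
    exact (mul_dvd_mul_iff_left (pow_ne_zero k hp.pos.ne')).mp h4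
  · intro h
    have h3 : p^e ∣ p^k * c.val := by
      have hpe : p^e = p^k * p^(e-k) := by rw [← pow_add, Nat.add_sub_cancel' hk]
      exact dvd_trans (dvd_of_eq hpe) (mul_dvd_mul_left _ h)
    have h2 : ((p^k * c.val : ℕ) : ZMod (p^e)) = 0 := (ZMod.natCast_eq_zero_iff _ _).mpr h3
    rw [Nat.cast_mul, Nat.cast_pow, hc] at h2
    exact h2

lemma vp_spec (hp : p.Prime) (he : 1 ≤ e) {y : ZMod (p^e)} (hy : y ≠ 0) :
    vp p e y < e ∧ ∃ w, IsUnit w ∧ y = (p:ZMod (p^e))^(vp p e y) * w := by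
  haveI : NeZero (p^e) := ⟨(pow_pos hp.pos e).ne'⟩
  haveI : Fact p.Prime := ⟨hp⟩
  have hv0 : y.val ≠ 0 := fun h => hy (by rwa [← ZMod.val_eq_zero])
  set k := padicValNat p y.val with hkdef
  have hdvd : p^k ∣ y.val := pow_padicValNat_dvd
  have hnd : ¬ p^(k+1) ∣ y.val := pow_succ_padicValNat_not_dvd hv0
  have hklt : k < e := by
    have h1 : p^k ≤ y.val := Nat.le_of_dvd (Nat.pos_of_ne_zero hv0) hdvd
    have h2 : y.val < p^e := ZMod.val_lt y
    exact (Nat.pow_lt_pow_iff_right hp.one_lt).mp (lt_of_le_of_lt h1 h2)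
  have hvp : vp p e y = k := by
    rw [vp, if_neg hy, min_eq_left hklt.le]
  obtain ⟨m, hm⟩ := hdvd
  have hpm : ¬ p ∣ m := by
    rintro ⟨m', rfl⟩
    exact hnd ⟨m', by rw [hm, pow_succ]; ring⟩
  refine ⟨hvp ▸ hklt, (m : ZMod (p^e)), ?_, ?_⟩
  · rw [isUnit_iff_not_dvd hp he]
    intro hd
    have := (pow_dvd_iff hp he he (m : ZMod (p^e))).mp (by rwa [pow_one])
    rw [pow_one, ZMod.val_natCast] at this
    exact hpm ((Nat.dvd_mod_iff (dvd_pow_self p (Nat.one_le_iff_ne_zero.mp he))).mp this)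
  · rw [hvp]
    have : y = ((y.val : ℕ) : ZMod (p^e)) := by rw [ZMod.natCast_val, ZMod.cast_id]
    rw [this, hm]
    push_cast
    ring

lemma casthom_eq_one_iff (hp : p.Prime) (he : 1 ≤ e) {m : ℕ} (hm : m ≤ e)
    (hd : p^m ∣ p^e) (z : ZMod (p^e)) :
    (ZMod.castHom hd (ZMod (p^m))) z = 1 ↔ (p:ZMod (p^e))^m ∣ (z - 1) := by
  haveI : NeZero (p^e) := ⟨(pow_pos hp.pos e).ne'⟩
  haveI : NeZero (p^m) := ⟨(pow_pos hp.pos m).ne'⟩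
  rw [← sub_eq_zero, ← map_one (ZMod.castHom hd (ZMod (p^m))), ← map_sub]
  rw [ZMod.castHom_apply, ← ZMod.natCast_val, ZMod.natCast_eq_zero_iff,
    ← pow_dvd_iff hp he hm]

end Stmt15Aux

open Stmt15Aux

/-- For `a` a unit, `b ∈ p·Z/p^e Z`, and `t² - b t - a = (t-α)(t-β)` with
`α, β` units: `α - β` is a unit, and for any unit `x₀ ∉ {α, β}` the orbit of
`x₀` under the inversive map is purely periodic with least period equal to
the multiplicative order of `αβ⁻¹` modulo `p^{e-k'}`, where
`k' = max (v_p(x₀-α)) (v_p(x₀-β))`. -/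
theorem stmt15 (p : ℕ) (hp : p.Prime) (hp2 : p ≠ 2) (e : ℕ) (he : 1 ≤ e)
    (a b α β : ZMod (p ^ e)) (ha : IsUnit a) (hpb : (p : ZMod (p ^ e)) ∣ b)
    (hα : IsUnit α) (hβ : IsUnit β)
    (hfac : (X ^ 2 - C b * X - C a : Polynomial (ZMod (p ^ e)))
      = (X - C α) * (X - C β))
    (φ : ZMod (p ^ e) → ZMod (p ^ e))
    (hφ : ∀ x, φ x = if IsUnit x then a * x⁻¹ + b else b) :
    IsUnit (α - β) ∧
    ∀ x0 : ZMod (p ^ e), IsUnit x0 → x0 ≠ α → x0 ≠ β →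
      let k' := max (vp p e (x0 - α)) (vp p e (x0 - β))
      let T := orderOf
        ((ZMod.castHom (pow_dvd_pow p (Nat.sub_le e k')) (ZMod (p ^ (e - k'))))
          (α * β⁻¹))
      φ^[T] x0 = x0 ∧ ∀ T', 0 < T' → φ^[T'] x0 = x0 → T ≤ T' := by
  haveI : NeZero (p^e) := ⟨(pow_pos hp.pos e).ne'⟩
  -- coefficients of the factorization
  have hexp : ((X - C α) * (X - C β) : Polynomial (ZMod (p^e)))
      = X^2 - C (α+β) * X + C (α*β) := by
    rw [C_add, C_mul]; ring
  have hf : (X ^ 2 - C b * X - C a : Polynomial (ZMod (p ^ e)))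
      = X^2 - C (α+β) * X + C (α*β) := hfac.trans hexp
  have hb : b = α + β := by
    have h1 := congrArg (fun q => Polynomial.coeff q 1) hf
    simp [coeff_one, coeff_C] at h1
    linear_combination -h1
  have hab : a = -(α*β) := by
    have h0 := congrArg (fun q => Polynomial.coeff q 0) hf
    simp [coeff_one, coeff_C] at h0
    linear_combination -h0
  -- 2 is a unit
  have h2u : IsUnit (2 : ZMod (p^e)) := by
    rw [isUnit_iff_not_dvd hp he]
    intro hd
    have h21 : (2:ℕ) < p^e := lt_of_lt_of_le (lt_of_le_of_ne hp.two_le (Ne.symm hp2)) (Nat.le_self_pow (by omega) p)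
    have := (pow_dvd_iff hp he he (2 : ZMod (p^e))).mp (by rwa [pow_one])
    rw [pow_one] at this
    have hv2 : ((2:ZMod (p^e))).val = 2 := by
      have : ((2:ℕ) : ZMod (p^e)).val = 2 % p^e := ZMod.val_natCast (p^e) 2
      simpa [Nat.mod_eq_of_lt h21] using this
    rw [hv2] at this
    exact hp2 ((Nat.prime_dvd_prime_iff_eq hp Nat.prime_two).mp this)
  have hαβ : IsUnit (α - β) := by
    have heq : α - β = 2*α + (-b) := by rw [hb]; ring
    rw [heq]
    exact unit_add_p_mul hp he (h2u.mul hα) (dvd_neg.mpr hpb)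
  refine ⟨hαβ, ?_⟩
  intro x0 hx0 hx0a hx0b k' T
  haveI : Fact p.Prime := ⟨hp⟩
  have hyα : x0 - α ≠ 0 := sub_ne_zero.mpr hx0a
  have hyβ : x0 - β ≠ 0 := sub_ne_zero.mpr hx0b
  have hk'def : k' = max (vp p e (x0 - α)) (vp p e (x0 - β)) := rfl
  obtain ⟨hk1lt, w1, hw1u, hw1e⟩ := vp_spec hp he hyα
  obtain ⟨hk2lt, w2, hw2u, hw2e⟩ := vp_spec hp he hyβ
  set k1 := vp p e (x0 - α) with hk1def
  set k2 := vp p e (x0 - β) with hk2def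
  have hk'lt : k' < e := by rw [hk'def]; exact max_lt hk1lt hk2lt
  have hmin : k1 = 0 ∨ k2 = 0 := by
    by_contra hcon
    push_neg at hcon
    have hd1 : (p:ZMod (p^e)) ∣ (x0 - α) := by
      rw [hw1e]; exact Dvd.dvd.mul_right (dvd_pow_self (p:ZMod (p^e)) hcon.1) w1
    have hd2 : (p:ZMod (p^e)) ∣ (x0 - β) := by
      rw [hw2e]; exact Dvd.dvd.mul_right (dvd_pow_self (p:ZMod (p^e)) hcon.2) w2
    have h3 := dvd_sub hd2 hd1
    have h4 : (x0 - β) - (x0 - α) = α - β := by ring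
    rw [h4] at h3
    exact (isUnit_iff_not_dvd hp he _).mp hαβ h3
  have hksum : k1 + k2 = k' := by rw [hk'def]; omega
  set v : ℕ → ZMod (p^e) := fun n => (x0 - β) * α^n + (α - x0) * β^n with hv
  have hvu : ∀ n, IsUnit (v n) := by
    intro n
    rcases Nat.eq_zero_or_pos k1 with h1 | h1
    · rcases Nat.eq_zero_or_pos k2 with h2 | h2
      · rw [isUnit_iff_not_dvd hp he]
        intro hcon
        have hd1 : (p:ZMod (p^e)) ∣ α + β := hb ▸ hpb
        have hd2 : (p:ZMod (p^e)) ∣ β^n - (-α)^n := by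
          refine dvd_trans ?_ (sub_dvd_pow_sub_pow β (-α) n)
          rw [sub_neg_eq_add, add_comm]
          exact hd1
        have h3 := dvd_add (dvd_sub hcon (hd2.mul_left (α - x0))) (hd1.mul_right (α^n))
        rcases Nat.even_or_odd n with hpar | hpar
        · have key : (p:ZMod (p^e)) ∣ 2*α^(n+1) := by
            convert h3 using 1
            simp only [hv]
            rw [Even.neg_pow hpar]
            ring
          exact (isUnit_iff_not_dvd hp he _).mp (h2u.mul (hα.pow _)) key
        · have key : (p:ZMod (p^e)) ∣ 2*(x0*α^n) := by
            convert h3 using 1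
            simp only [hv]
            rw [Odd.neg_pow hpar]
            ring
          exact (isUnit_iff_not_dvd hp he _).mp (h2u.mul (hx0.mul (hα.pow _))) key
      · have hvn : v n = -(w1 * β^n) + (p:ZMod (p^e))^k2 * w2 * α^n := by
          simp only [hv]
          rw [show (x0 - β) = (p:ZMod (p^e))^k2 * w2 from hw2e,
            show (α - x0) = -((p:ZMod (p^e))^k1 * w1) from by rw [← hw1e]; ring, h1]
          ring
        rw [hvn]
        refine unit_add_p_mul hp he ((hw1u.mul (hβ.pow n)).neg) ?_
        exact (Dvd.dvd.mul_right (Dvd.dvd.mul_right (dvd_pow_self (p:ZMod (p^e)) h2.ne') w2) (α^n))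
    · have h2 : k2 = 0 := by omega
      have hvn : v n = w2 * α^n + -((p:ZMod (p^e))^k1 * w1 * β^n) := by
        simp only [hv]
        rw [show (x0 - β) = (p:ZMod (p^e))^k2 * w2 from hw2e,
          show (α - x0) = -((p:ZMod (p^e))^k1 * w1) from by rw [← hw1e]; ring, h2]
        ring
      rw [hvn]
      refine unit_add_p_mul hp he (hw2u.mul (hα.pow n)) ?_
      exact dvd_neg.mpr (Dvd.dvd.mul_right (Dvd.dvd.mul_right (dvd_pow_self (p:ZMod (p^e)) h1.ne') w1) (β^n))
  have hroot : ∀ n : ℕ, v (n+2) = b * v (n+1) + a * v n := by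
    intro n
    simp only [hv]
    rw [hb, hab]
    ring
  have hinv : ∀ y z : ZMod (p^e), IsUnit y → y * z = 1 → y⁻¹ = z := by
    intro y z hy hyz
    have h1 := ZMod.inv_mul_of_unit y hy
    calc y⁻¹ = y⁻¹ * (y * z) := by rw [hyz, mul_one]
      _ = (y⁻¹ * y) * z := by ring
      _ = z := by rw [h1, one_mul]
  have hiter : ∀ n, φ^[n] x0 = v (n+1) * (v n)⁻¹ := by
    intro n
    induction n with
    | zero =>
      have hv1 : v 1 = x0 * v 0 := by simp only [hv]; ring
      simp only [Function.iterate_zero, id_eq]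
      rw [hv1, mul_assoc, ZMod.mul_inv_of_unit _ (hvu 0), mul_one]
    | succ n ih =>
      rw [Function.iterate_succ_apply', ih, hφ]
      have hxu : IsUnit (v (n+1) * (v n)⁻¹) :=
        (hvu (n+1)).mul (IsUnit.of_mul_eq_one _ (ZMod.inv_mul_of_unit _ (hvu n)))
      rw [if_pos hxu]
      have hxinv : (v (n+1) * (v n)⁻¹)⁻¹ = v n * (v (n+1))⁻¹ := by
        refine hinv _ _ hxu ?_
        have h1' := ZMod.inv_mul_of_unit _ (hvu n)
        have h2 := ZMod.mul_inv_of_unit _ (hvu (n+1))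
        calc v (n+1) * (v n)⁻¹ * (v n * (v (n+1))⁻¹)
            = (v (n+1) * (v (n+1))⁻¹) * ((v n)⁻¹ * v n) := by ring
          _ = 1 := by rw [h1', h2, mul_one]
      rw [hxinv, hroot n]
      have h2 := ZMod.mul_inv_of_unit _ (hvu (n+1))
      linear_combination (-b) * h2
  have hfix : ∀ n, (φ^[n] x0 = x0 ↔ v (n+1) = x0 * v n) := by
    intro n
    rw [hiter n]
    constructor
    · intro h
      have h5 := congrArg (· * v n) h
      rwa [mul_assoc, ZMod.inv_mul_of_unit _ (hvu n), mul_one] at h5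
    · intro h
      rw [h, mul_assoc, ZMod.mul_inv_of_unit _ (hvu n), mul_one]
  have hzn : ∀ n : ℕ, β^n * ((α*β⁻¹)^n - 1) = α^n - β^n := by
    intro n
    have h1 : β * β⁻¹ = 1 := ZMod.mul_inv_of_unit _ hβ
    have h2 : β^n * (α*β⁻¹)^n = α^n := by
      rw [← mul_pow, show β * (α * β⁻¹) = α * (β * β⁻¹) from by ring, h1, mul_one]
    rw [mul_sub, h2, mul_one]
  have hiff : ∀ n, (φ^[n] x0 = x0 ↔ T ∣ n) := by
    intro n
    rw [hfix n, ← sub_eq_zero]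
    have hdiff : v (n+1) - x0 * v n
        = -(((p:ZMod (p^e))^k' * (w1 * w2 * β^n)) * ((α*β⁻¹)^n - 1)) := by
      have h6 : v (n+1) - x0 * v n = -((x0-α)*(x0-β)*(α^n - β^n)) := by
        simp only [hv]; ring
      rw [h6, hw1e, hw2e, ← hzn n, ← hksum, pow_add]
      ring
    rw [hdiff, neg_eq_zero]
    have hW : IsUnit (w1 * w2 * β^n) := (hw1u.mul hw2u).mul (hβ.pow n)
    have hre : (p:ZMod (p^e))^k' * (w1*w2*β^n) * ((α*β⁻¹)^n - 1)
        = (w1*w2*β^n) * ((p:ZMod (p^e))^k' * ((α*β⁻¹)^n - 1)) := by ring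
    rw [hre, hW.mul_right_eq_zero, pmul_eq_zero_iff hp he hk'lt.le,
      ← casthom_eq_one_iff hp he (Nat.sub_le e k') (pow_dvd_pow p (Nat.sub_le e k')), map_pow]
    exact orderOf_dvd_iff_pow_eq_one.symm
  exact ⟨(hiff T).mpr dvd_rfl, fun T' hT' hfixT' => Nat.le_of_dvd hT' ((hiff T').mp hfixT')⟩
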